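/- Let Ā ∈ ℝ^{p×p} be symmetric with eigenvalues λ₁ ≥ ⋯ ≥ λ_p and λ_m > 0. Let P ∈ ℝ^{p×m} have as columns orthonormal eigenvectors for λ₁,…,λ_m and P⊥ ∈ ℝ^{p×(p−m)} orthonormal eigenvectors for the remaining eigenvalues, so [P, P⊥] is orthogonal. Let Q_{t-1} ∈ ℝ^{p×m} satisfy Q_{t-1}ᵀQ_{t-1} = I_m, set X_{t-1} = PᵀQ_{t-1} and Y_{t-1} = P⊥ᵀQ_{t-1}, and assume X_{t-1} is invertible. Let Q_t R_t = ĀQ_{t-1} be a QR factorization with R_t invertible. Then ‖R_t⁻¹‖₂ ≤ 1 / (λ_m √(1 − ‖Y_{t-1}‖₂²)). -/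
import Mathlib


open Matrix

noncomputable def specNorm {p m : ℕ} (A : Matrix (Fin p) (Fin m) ℝ) : ℝ :=
  ‖LinearMap.toContinuousLinearMap (Matrix.toEuclideanLin A)‖

noncomputable def frobNorm {p m : ℕ} (A : Matrix (Fin p) (Fin m) ℝ) : ℝ :=
  Real.sqrt (∑ i, ∑ j, (A i j) ^ 2)

noncomputable def enorm {p : ℕ} (v : Fin p → ℝ) : ℝ :=
  Real.sqrt (∑ i, (v i) ^ 2)

noncomputable def l0norm {p : ℕ} (v : Fin p → ℝ) : ℕ :=
  (Finset.univ.filter fun i => v i ≠ 0).card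

noncomputable def truncate {p : ℕ} (y : Fin p → ℝ) (F : Finset (Fin p)) : Fin p → ℝ :=
  fun i => if i ∈ F then y i else 0

noncomputable def rhoEK {p m : ℕ} (E : Matrix (Fin p) (Fin p) ℝ) (K : Fin m → ℕ) : ℝ :=
  sSup {c | ∃ Q : Matrix (Fin p) (Fin m) ℝ,
    Qᵀ * Q = 1 ∧ (∀ i, l0norm (fun r => Q r i) ≤ K i) ∧ c = specNorm (E * Q)}

noncomputable def sinTheta2 {p m : ℕ} (P Q : Matrix (Fin p) (Fin m) ℝ) : ℝ :=
  specNorm ((1 - P * Pᵀ) * Q)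

noncomputable def sinThetaF {p m : ℕ} (P Q : Matrix (Fin p) (Fin m) ℝ) : ℝ :=
  frobNorm ((1 - P * Pᵀ) * Q)

namespace RtAux

noncomputable def clm {p m : ℕ} (A : Matrix (Fin p) (Fin m) ℝ) :
    EuclideanSpace ℝ (Fin m) →L[ℝ] EuclideanSpace ℝ (Fin p) :=
  LinearMap.toContinuousLinearMap (Matrix.toEuclideanLin A)

lemma specNorm_eq {p m : ℕ} (A : Matrix (Fin p) (Fin m) ℝ) : specNorm A = ‖clm A‖ := rfl

lemma clm_apply {p m : ℕ} (A : Matrix (Fin p) (Fin m) ℝ) (x : EuclideanSpace ℝ (Fin m)) (i : Fin p) :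
    clm A x i = (A *ᵥ (fun j => x j)) i := rfl

lemma norm_sq_dot {p : ℕ} (x : EuclideanSpace ℝ (Fin p)) :
    ‖x‖ ^ 2 = (fun i => x i) ⬝ᵥ (fun i => x i) := by
  rw [EuclideanSpace.norm_eq, Real.sq_sqrt (by positivity)]
  simp [dotProduct, Real.norm_eq_abs, sq_abs, pow_two]

lemma dot_mulVec_self {p m : ℕ} (A : Matrix (Fin p) (Fin m) ℝ) (v : Fin m → ℝ) :
    (A *ᵥ v) ⬝ᵥ (A *ᵥ v) = v ⬝ᵥ ((Aᵀ * A) *ᵥ v) := by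
  rw [dotProduct_mulVec, ← mulVec_transpose, mulVec_mulVec]
  exact dotProduct_comm _ _

lemma dot_isometry {p m : ℕ} {A : Matrix (Fin p) (Fin m) ℝ} (hA : Aᵀ * A = 1) (v : Fin m → ℝ) :
    (A *ᵥ v) ⬝ᵥ (A *ᵥ v) = v ⬝ᵥ v := by
  rw [dot_mulVec_self, hA, one_mulVec]

lemma dot_self_nonneg {m : ℕ} (v : Fin m → ℝ) : 0 ≤ v ⬝ᵥ v :=
  Finset.sum_nonneg fun i _ => mul_self_nonneg _

lemma exists_max {p m : ℕ} (hm : 1 ≤ m) (A : Matrix (Fin p) (Fin m) ℝ) :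
    ∃ v : EuclideanSpace ℝ (Fin m), ‖v‖ = 1 ∧ ‖clm A‖ = ‖clm A v‖ := by
  haveI : Nontrivial (EuclideanSpace ℝ (Fin m)) := by
    refine nontrivial_of_ne (EuclideanSpace.single ⟨0, hm⟩ (1:ℝ)) 0 ?_
    intro h
    have := congrArg norm h
    rw [EuclideanSpace.norm_single, norm_zero] at this
    simp at this
  have hne : (Metric.sphere (0 : EuclideanSpace ℝ (Fin m)) 1).Nonempty :=
    NormedSpace.sphere_nonempty.mpr zero_le_one
  have hcomp : IsCompact (Metric.sphere (0 : EuclideanSpace ℝ (Fin m)) 1) :=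
    isCompact_sphere 0 1
  obtain ⟨v₀, hv₀mem, hmax⟩ := hcomp.exists_isMaxOn hne
    ((continuous_norm.comp (clm A).continuous).continuousOn)
  have hv₀ : ‖v₀‖ = 1 := by simpa using mem_sphere_zero_iff_norm.mp hv₀mem
  refine ⟨v₀, hv₀, le_antisymm ?_ ?_⟩
  · refine ContinuousLinearMap.opNorm_le_bound _ (norm_nonneg _) fun x => ?_
    rcases eq_or_ne x 0 with rfl | hx
    · simp
    · have hxn : ‖x‖ ≠ 0 := norm_ne_zero_iff.mpr hx
      have hmem : (‖x‖⁻¹ • x) ∈ Metric.sphere (0 : EuclideanSpace ℝ (Fin m)) 1 := by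
        rw [mem_sphere_zero_iff_norm, norm_smul, norm_inv, norm_norm,
          inv_mul_cancel₀ hxn]
      have hb : ‖clm A (‖x‖⁻¹ • x)‖ ≤ ‖clm A v₀‖ := hmax hmem
      have heq : ‖clm A (‖x‖⁻¹ • x)‖ = ‖x‖⁻¹ * ‖clm A x‖ := by
        rw [(clm A).map_smul, norm_smul, norm_inv, norm_norm]
      rw [heq] at hb
      calc ‖clm A x‖ = ‖x‖ * (‖x‖⁻¹ * ‖clm A x‖) := by
            field_simp
        _ ≤ ‖x‖ * ‖clm A v₀‖ := by
            exact mul_le_mul_of_nonneg_left hb (norm_nonneg _)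
        _ = ‖clm A v₀‖ * ‖x‖ := mul_comm _ _
  · calc ‖clm A v₀‖ ≤ ‖clm A‖ * ‖v₀‖ := (clm A).le_opNorm v₀
      _ = ‖clm A‖ := by rw [hv₀, mul_one]

lemma inv_bound {m : ℕ} (R : Matrix (Fin m) (Fin m) ℝ) (hR : IsUnit R.det) {K : ℝ} (hK : 0 < K)
    (h : ∀ v : Fin m → ℝ, K ^ 2 * (v ⬝ᵥ v) ≤ (R *ᵥ v) ⬝ᵥ (R *ᵥ v)) :
    specNorm R⁻¹ ≤ 1 / K := by
  rw [specNorm_eq]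
  refine ContinuousLinearMap.opNorm_le_bound _ (by positivity) fun w => ?_
  set v : EuclideanSpace ℝ (Fin m) := clm R⁻¹ w with hv
  have hfun : (fun j => v j) = R⁻¹ *ᵥ (fun j => w j) := by
    funext j; exact clm_apply _ _ j
  have hRv : R *ᵥ (fun j => v j) = (fun j => w j) := by
    rw [hfun, mulVec_mulVec, mul_nonsing_inv _ hR, one_mulVec]
  have h1 : K ^ 2 * ‖v‖ ^ 2 ≤ ‖w‖ ^ 2 := by
    rw [norm_sq_dot, norm_sq_dot, ← hRv]
    exact h _
  have h2 : (K * ‖v‖) ^ 2 ≤ ‖w‖ ^ 2 := by rw [mul_pow]; exact h1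
  have h3 : K * ‖v‖ ≤ ‖w‖ := by
    have := Real.sqrt_le_sqrt h2
    rwa [Real.sqrt_sq (by positivity), Real.sqrt_sq (norm_nonneg _)] at this
  have h4 : ‖v‖ ≤ ‖w‖ / K := (le_div_iff₀ hK).mpr (by linarith)
  calc ‖v‖ ≤ ‖w‖ / K := h4
    _ = 1 / K * ‖w‖ := by rw [div_eq_mul_inv, one_div, mul_comm]

end RtAux

/-- bound on the spectral norm of `R_t⁻¹`. -/
theorem Rt_inverse_bound
    {p m : ℕ} (hm1 : 1 ≤ m) (hmp : m ≤ p)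
    (Abar : Matrix (Fin p) (Fin p) ℝ) (hAsym : Abar.IsSymm)
    (lam : Fin p → ℝ)
    (hord : ∀ i j : Fin p, i ≤ j → lam j ≤ lam i)
    (hlm : 0 < lam ⟨m - 1, by omega⟩)
    (V : Matrix (Fin p) (Fin p) ℝ) (hV : Vᵀ * V = 1)
    (hAV : Abar * V = V * Matrix.diagonal lam)
    (P : Matrix (Fin p) (Fin m) ℝ)
    (hP : P = V.submatrix id (Fin.castLE hmp))
    (Pperp : Matrix (Fin p) (Fin (p - m)) ℝ)
    (hPperp : Pperp = V.submatrix id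
      (fun j : Fin (p - m) => Fin.cast (by omega : m + (p - m) = p) (Fin.natAdd m j)))
    (Qprev : Matrix (Fin p) (Fin m) ℝ) (hQprev : Qprevᵀ * Qprev = 1)
    (X : Matrix (Fin m) (Fin m) ℝ) (hX : X = Pᵀ * Qprev)
    (Y : Matrix (Fin (p - m)) (Fin m) ℝ) (hY : Y = Pperpᵀ * Qprev)
    (hXinv : IsUnit X.det)
    (Qt : Matrix (Fin p) (Fin m) ℝ) (Rt : Matrix (Fin m) (Fin m) ℝ)
    (hQt : Qtᵀ * Qt = 1)
    (hRtri : Rt.BlockTriangular id) (hRinv : IsUnit Rt.det)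
    (hQR : Qt * Rt = Abar * Qprev) :
    specNorm Rt⁻¹ ≤
      1 / (lam ⟨m - 1, by omega⟩ * Real.sqrt (1 - specNorm Y ^ 2)) := by
  classical
  have hc : (0:ℝ) < lam ⟨m - 1, by omega⟩ := hlm
  set c : ℝ := lam ⟨m - 1, by omega⟩ with hcdef
  set s : ℝ := specNorm Y with hsdef
  have hs0 : 0 ≤ s := by rw [hsdef, RtAux.specNorm_eq]; exact norm_nonneg _
  have hVVT : V * Vᵀ = 1 := mul_eq_one_comm.mp hV
  have hVA : Vᵀ * Abar = Matrix.diagonal lam * Vᵀ := by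
    have h1 := congrArg Matrix.transpose hAV
    rw [Matrix.transpose_mul, Matrix.transpose_mul, Matrix.diagonal_transpose, hAsym.eq] at h1
    exact h1
  have hpm : m + (p - m) = p := by omega
  set e : Fin m ⊕ Fin (p - m) ≃ Fin p := finSumFinEquiv.trans (finCongr hpm) with hedef
  have heinl : ∀ a : Fin m, e (Sum.inl a) = Fin.castLE hmp a := by
    intro a; ext; simp [hedef]
  have heinr : ∀ b : Fin (p - m), e (Sum.inr b) = Fin.cast hpm (Fin.natAdd m b) := by
    intro b; ext; simp [hedef]
  have hsplit : ∀ f : Fin p → ℝ,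
      ∑ i, f i = (∑ a : Fin m, f (e (Sum.inl a))) + ∑ b : Fin (p - m), f (e (Sum.inr b)) := by
    intro f
    rw [← Equiv.sum_comp e f, Fintype.sum_sum_type]
  have hu : ∀ v : Fin m → ℝ,
      (Vᵀ *ᵥ (Qprev *ᵥ v)) ⬝ᵥ (Vᵀ *ᵥ (Qprev *ᵥ v)) = v ⬝ᵥ v := by
    intro v
    rw [mulVec_mulVec]
    refine RtAux.dot_isometry ?_ v
    rw [Matrix.transpose_mul, Matrix.transpose_transpose, Matrix.mul_assoc,
      ← Matrix.mul_assoc V Vᵀ Qprev, hVVT, Matrix.one_mul]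
    exact hQprev
  have hXc : ∀ (v : Fin m → ℝ) (a : Fin m),
      (X *ᵥ v) a = (Vᵀ *ᵥ (Qprev *ᵥ v)) (e (Sum.inl a)) := by
    intro v a
    rw [hX, ← mulVec_mulVec, heinl]
    simp [hP, mulVec, dotProduct, Matrix.transpose_apply, Matrix.submatrix_apply]
  have hYc : ∀ (v : Fin m → ℝ) (b : Fin (p - m)),
      (Y *ᵥ v) b = (Vᵀ *ᵥ (Qprev *ᵥ v)) (e (Sum.inr b)) := by
    intro v b
    rw [hY, ← mulVec_mulVec, heinr]
    simp [hPperp, mulVec, dotProduct, Matrix.transpose_apply, Matrix.submatrix_apply]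
  have hpyth : ∀ v : Fin m → ℝ,
      (X *ᵥ v) ⬝ᵥ (X *ᵥ v) + (Y *ᵥ v) ⬝ᵥ (Y *ᵥ v) = v ⬝ᵥ v := by
    intro v
    set u : Fin p → ℝ := Vᵀ *ᵥ (Qprev *ᵥ v) with hudef
    have h := hsplit (fun i => u i * u i)
    have hx : (X *ᵥ v) ⬝ᵥ (X *ᵥ v) = ∑ a : Fin m, u (e (Sum.inl a)) * u (e (Sum.inl a)) := by
      simp only [dotProduct]
      exact Finset.sum_congr rfl fun a _ => by rw [hXc v a]
    have hy : (Y *ᵥ v) ⬝ᵥ (Y *ᵥ v) = ∑ b : Fin (p - m), u (e (Sum.inr b)) * u (e (Sum.inr b)) := by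
      simp only [dotProduct]
      exact Finset.sum_congr rfl fun b _ => by rw [hYc v b]
    have huu : u ⬝ᵥ u = v ⬝ᵥ v := hu v
    rw [hx, hy, ← h]
    exact huu
  -- norm-squared facts connecting clm Y with matrix mulVec
  have hYnorm : ∀ x : EuclideanSpace ℝ (Fin m),
      ‖RtAux.clm Y x‖ ^ 2 = (Y *ᵥ (fun j => x j)) ⬝ᵥ (Y *ᵥ (fun j => x j)) := by
    intro x
    rw [RtAux.norm_sq_dot]
    rfl
  have hdotnorm : ∀ x : EuclideanSpace ℝ (Fin m),
      ‖x‖ ^ 2 = (fun j => x j) ⬝ᵥ (fun j => x j) := RtAux.norm_sq_dot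
  -- s < 1
  obtain ⟨v₀, hv₀n, hv₀max⟩ := RtAux.exists_max hm1 Y
  set w₀ : Fin m → ℝ := fun j => v₀ j with hw₀def
  have hw₀dot : w₀ ⬝ᵥ w₀ = 1 := by
    have h := hdotnorm v₀
    rw [hv₀n] at h
    simpa using h.symm
  have hXv₀ : X *ᵥ w₀ ≠ 0 := by
    intro h0
    have hw0 : w₀ = 0 := by
      have h1 := congrArg (fun z => X⁻¹ *ᵥ z) h0
      simpa [mulVec_mulVec, Matrix.nonsing_inv_mul X hXinv, one_mulVec] using h1
    rw [hw0] at hw₀dot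
    simp [dotProduct] at hw₀dot
  have hXpos : 0 < (X *ᵥ w₀) ⬝ᵥ (X *ᵥ w₀) := by
    rcases lt_or_eq_of_le (RtAux.dot_self_nonneg (X *ᵥ w₀)) with h | h
    · exact h
    · exact absurd (dotProduct_self_eq_zero.mp h.symm) hXv₀
  have hs2 : s ^ 2 = 1 - (X *ᵥ w₀) ⬝ᵥ (X *ᵥ w₀) := by
    have h1 : s = ‖RtAux.clm Y v₀‖ := by rw [hsdef, RtAux.specNorm_eq, hv₀max]
    have h2 := hYnorm v₀
    have h3 := hpyth w₀
    rw [hw₀dot] at h3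
    rw [h1, h2]
    linarith
  have h1s : 0 < 1 - s ^ 2 := by rw [hs2]; linarith
  -- the Y operator-norm bound pointwise
  have hYb : ∀ v : Fin m → ℝ, (Y *ᵥ v) ⬝ᵥ (Y *ᵥ v) ≤ s ^ 2 * (v ⬝ᵥ v) := by
    intro v
    set x : EuclideanSpace ℝ (Fin m) := (WithLp.equiv 2 (Fin m → ℝ)).symm v with hxdef
    have h1 : ‖RtAux.clm Y x‖ ≤ s * ‖x‖ := by
      rw [hsdef, RtAux.specNorm_eq]
      exact (RtAux.clm Y).le_opNorm x
    have h2 : ‖RtAux.clm Y x‖ ^ 2 ≤ (s * ‖x‖) ^ 2 :=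
      pow_le_pow_left₀ (norm_nonneg _) h1 2
    have h3 := hYnorm x
    have h4 := hdotnorm x
    have h5 : (fun j => x j) = v := rfl
    rw [h5] at h3 h4
    calc (Y *ᵥ v) ⬝ᵥ (Y *ᵥ v) = ‖RtAux.clm Y x‖ ^ 2 := h3.symm
      _ ≤ (s * ‖x‖) ^ 2 := h2
      _ = s ^ 2 * ‖x‖ ^ 2 := by ring
      _ = s ^ 2 * (v ⬝ᵥ v) := by rw [h4]
  -- main lower bound on Rt
  have key : ∀ v : Fin m → ℝ,
      (c * Real.sqrt (1 - s ^ 2)) ^ 2 * (v ⬝ᵥ v) ≤ (Rt *ᵥ v) ⬝ᵥ (Rt *ᵥ v) := by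
    intro v
    set u : Fin p → ℝ := Vᵀ *ᵥ (Qprev *ᵥ v) with hudef
    have e1 : ((Abar * Qprev) *ᵥ v) ⬝ᵥ ((Abar * Qprev) *ᵥ v) = (Rt *ᵥ v) ⬝ᵥ (Rt *ᵥ v) := by
      rw [← hQR, ← mulVec_mulVec]
      exact RtAux.dot_isometry hQt _
    have hVtV : (Vᵀ)ᵀ * Vᵀ = 1 := by rw [Matrix.transpose_transpose]; exact hVVT
    have e2 : ((Abar * Qprev) *ᵥ v) ⬝ᵥ ((Abar * Qprev) *ᵥ v)
        = (Vᵀ *ᵥ ((Abar * Qprev) *ᵥ v)) ⬝ᵥ (Vᵀ *ᵥ ((Abar * Qprev) *ᵥ v)) :=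
      (RtAux.dot_isometry hVtV _).symm
    have e3 : Vᵀ *ᵥ ((Abar * Qprev) *ᵥ v) = fun i => lam i * u i := by
      rw [mulVec_mulVec, ← Matrix.mul_assoc, hVA, Matrix.mul_assoc, ← mulVec_mulVec]
      funext i
      rw [mulVec_diagonal]
      rw [hudef, mulVec_mulVec]
    have hsum : (Rt *ᵥ v) ⬝ᵥ (Rt *ᵥ v) = ∑ i, (lam i * u i) * (lam i * u i) := by
      rw [← e1, e2, e3]
      rfl
    have hsplit' := hsplit (fun i => (lam i * u i) * (lam i * u i))
    have hBnn : 0 ≤ ∑ b : Fin (p - m),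
        lam (e (Sum.inr b)) * u (e (Sum.inr b)) * (lam (e (Sum.inr b)) * u (e (Sum.inr b))) :=
      Finset.sum_nonneg fun b _ => mul_self_nonneg _
    have hAle : ∀ a : Fin m, c ^ 2 * (u (e (Sum.inl a)) * u (e (Sum.inl a)))
        ≤ (lam (e (Sum.inl a)) * u (e (Sum.inl a))) * (lam (e (Sum.inl a)) * u (e (Sum.inl a))) := by
      intro a
      have hle : c ≤ lam (e (Sum.inl a)) := by
        apply hord
        rw [heinl]
        simp [Fin.le_def]
        omega
      have hcc : c * c ≤ lam (e (Sum.inl a)) * lam (e (Sum.inl a)) :=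
        mul_le_mul hle hle hc.le (hc.le.trans hle)
      nlinarith [mul_le_mul_of_nonneg_right hcc (mul_self_nonneg (u (e (Sum.inl a))))]
    have hXsum : (X *ᵥ v) ⬝ᵥ (X *ᵥ v) = ∑ a : Fin m, u (e (Sum.inl a)) * u (e (Sum.inl a)) := by
      simp only [dotProduct]
      exact Finset.sum_congr rfl fun a _ => by rw [hXc v a]
    have hfin : c ^ 2 * ((X *ᵥ v) ⬝ᵥ (X *ᵥ v)) ≤ (Rt *ᵥ v) ⬝ᵥ (Rt *ᵥ v) := by
      rw [hsum, hsplit', hXsum, Finset.mul_sum]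
      have := Finset.sum_le_sum (fun a (_ : a ∈ Finset.univ) => hAle a)
      linarith [hBnn, this]
    have hXid := hpyth v
    have hYle := hYb v
    have hsq : Real.sqrt (1 - s ^ 2) ^ 2 = 1 - s ^ 2 := Real.sq_sqrt (le_of_lt h1s)
    calc (c * Real.sqrt (1 - s ^ 2)) ^ 2 * (v ⬝ᵥ v)
        = c ^ 2 * ((1 - s ^ 2) * (v ⬝ᵥ v)) := by rw [mul_pow, hsq]; ring
      _ ≤ c ^ 2 * ((X *ᵥ v) ⬝ᵥ (X *ᵥ v)) := by
          apply mul_le_mul_of_nonneg_left _ (sq_nonneg c)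
          linarith [hpyth v, hYb v]
      _ ≤ _ := hfin
  have hK : 0 < c * Real.sqrt (1 - s ^ 2) := mul_pos hc (Real.sqrt_pos.mpr h1s)
  show specNorm Rt⁻¹ ≤ 1 / (c * Real.sqrt (1 - s ^ 2))
  exact RtAux.inv_bound Rt hRinv hK key
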